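/- If G is a finite simple graph without isolated vertices, then γ_Zg(G) ≤ γ_tg(G). -/
import Mathlib


/- Formalization of the domination games from "The variety of domination games".

A game is specified by a legality predicate `legal : List V → V → Prop`, where the list
records the previously played vertices (most recent first).  Players alternate moves;
each move must be legal; the game ends when no legal move exists.  Dominator wants to
minimize, Staller to maximize, the total number of moves.

`canEnd legal k turn h` states that, with history `h` and the player to move given by
`turn` (`true` = Dominator), Dominator can guarantee that at most `k` further moves are
played (against any play of Staller).  The value of the game under optimal play by both
players is then the least such `k` from the empty history. -/

/-- The closed neighborhood `N[v]` of a vertex. -/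
def closedNbhd {V : Type*} (G : SimpleGraph V) (v : V) : Set V :=
  insert v (G.neighborSet v)

/-- `⋃_{u ∈ h} N[u]` : the set of vertices dominated by the moves in `h`. -/
def dominatedBy {V : Type*} (G : SimpleGraph V) (h : List V) : Set V :=
  ⋃ u ∈ h, closedNbhd G u

/-- `⋃_{u ∈ h} N(u)` : the set of vertices totally dominated by the moves in `h`. -/
def totDominatedBy {V : Type*} (G : SimpleGraph V) (h : List V) : Set V :=
  ⋃ u ∈ h, G.neighborSet u

/-- Legality in the domination game: `N[v] \ ⋃_{j<i} N[v_j] ≠ ∅`. -/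
def dgLegal {V : Type*} (G : SimpleGraph V) (h : List V) (v : V) : Prop :=
  (closedNbhd G v \ dominatedBy G h).Nonempty

/-- Legality in the total domination game: `N(v) \ ⋃_{j<i} N(v_j) ≠ ∅`. -/
def tgLegal {V : Type*} (G : SimpleGraph V) (h : List V) (v : V) : Prop :=
  (G.neighborSet v \ totDominatedBy G h).Nonempty

/-- Legality in the Z-domination game on `G|A`: `N(v) \ (A ∪ ⋃_{j<i} N[v_j]) ≠ ∅`. -/
def zLegal {V : Type*} (G : SimpleGraph V) (A : Set V) (h : List V) (v : V) : Prop :=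
  (G.neighborSet v \ (A ∪ dominatedBy G h)).Nonempty

/-- Legality in the LL-domination game on `G|A`: `N[v] \ (A ∪ ⋃_{j<i} N(v_j)) ≠ ∅`. -/
def llLegal {V : Type*} (G : SimpleGraph V) (A : Set V) (h : List V) (v : V) : Prop :=
  (closedNbhd G v \ (A ∪ totDominatedBy G h)).Nonempty

/-- Legality in the L-domination game on `G|A`: as in the LL-game, and moreover no vertex
may be played twice. -/
def lLegal {V : Type*} (G : SimpleGraph V) (A : Set V) (h : List V) (v : V) : Prop :=
  llLegal G A h v ∧ v ∉ h

/-- `canEnd legal k turn h` : with previously played vertices `h` and the player to move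
given by `turn` (`true` = Dominator, `false` = Staller), Dominator has a strategy
guaranteeing that at most `k` further moves are made. -/
def canEnd {V : Type*} (legal : List V → V → Prop) : ℕ → Bool → List V → Prop
  | 0, _, h => ∀ v, ¬ legal h v
  | k+1, true, h => (∀ v, ¬ legal h v) ∨ ∃ v, legal h v ∧ canEnd legal k false (v :: h)
  | k+1, false, h => ∀ v, legal h v → canEnd legal k true (v :: h)

/-- The number of moves in the game with legality predicate `legal` when both players play
optimally (Dominator minimizing, Staller maximizing the number of moves); `dFirst = true`
means Dominator makes the first move. -/
noncomputable def gameVal {V : Type*} (legal : List V → V → Prop) (dFirst : Bool) : ℕ :=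
  sInf {k | canEnd legal k dFirst []}

/-- The game Z-domination number `γ_Zg(G|A)` (Dominator starts). -/
noncomputable def gammaZgA {V : Type*} (G : SimpleGraph V) (A : Set V) : ℕ :=
  gameVal (zLegal G A) true

/-- The Staller-start game Z-domination number `γ'_Zg(G|A)`. -/
noncomputable def gammaZgA' {V : Type*} (G : SimpleGraph V) (A : Set V) : ℕ :=
  gameVal (zLegal G A) false

/-- The game L-domination number `γ_Lg(G|A)` (Dominator starts). -/
noncomputable def gammaLgA {V : Type*} (G : SimpleGraph V) (A : Set V) : ℕ :=
  gameVal (lLegal G A) true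

/-- The Staller-start game L-domination number `γ'_Lg(G|A)`. -/
noncomputable def gammaLgA' {V : Type*} (G : SimpleGraph V) (A : Set V) : ℕ :=
  gameVal (lLegal G A) false

/-- The game LL-domination number `γ_LLg(G|A)` (Dominator starts). -/
noncomputable def gammaLLgA {V : Type*} (G : SimpleGraph V) (A : Set V) : ℕ :=
  gameVal (llLegal G A) true

/-- The Staller-start game LL-domination number `γ'_LLg(G|A)`. -/
noncomputable def gammaLLgA' {V : Type*} (G : SimpleGraph V) (A : Set V) : ℕ :=
  gameVal (llLegal G A) false

/-- The game domination number `γ_g(G)` (Dominator starts). -/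
noncomputable def gammaG {V : Type*} (G : SimpleGraph V) : ℕ :=
  gameVal (dgLegal G) true

/-- The game total domination number `γ_tg(G)` (Dominator starts). -/
noncomputable def gammaTg {V : Type*} (G : SimpleGraph V) : ℕ :=
  gameVal (tgLegal G) true

/-- The game Z-domination number `γ_Zg(G)` (Dominator starts). -/
noncomputable def gammaZg {V : Type*} (G : SimpleGraph V) : ℕ := gammaZgA G ∅

/-- The Staller-start game Z-domination number `γ'_Zg(G)`. -/
noncomputable def gammaZg' {V : Type*} (G : SimpleGraph V) : ℕ := gammaZgA' G ∅

/-- The game L-domination number `γ_Lg(G)` (Dominator starts). -/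
noncomputable def gammaLg {V : Type*} (G : SimpleGraph V) : ℕ := gammaLgA G ∅

/-- The Staller-start game L-domination number `γ'_Lg(G)`. -/
noncomputable def gammaLg' {V : Type*} (G : SimpleGraph V) : ℕ := gammaLgA' G ∅

/-- The game LL-domination number `γ_LLg(G)` (Dominator starts). -/
noncomputable def gammaLLg {V : Type*} (G : SimpleGraph V) : ℕ := gammaLLgA G ∅

/-- The Staller-start game LL-domination number `γ'_LLg(G)`. -/
noncomputable def gammaLLg' {V : Type*} (G : SimpleGraph V) : ℕ := gammaLLgA' G ∅

/-- `G` has no isolated vertices. -/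
def isolateFree {V : Type*} (G : SimpleGraph V) : Prop := ∀ v : V, ∃ u, G.Adj v u

/-- The domination number `γ(G)`. -/
noncomputable def domNum {V : Type*} (G : SimpleGraph V) : ℕ :=
  sInf {k | ∃ S : Finset V, S.card = k ∧ ∀ v : V, ∃ u ∈ S, v ∈ closedNbhd G u}

/-- The total domination number `γ_t(G)`. -/
noncomputable def totDomNum {V : Type*} (G : SimpleGraph V) : ℕ :=
  sInf {k | ∃ S : Finset V, S.card = k ∧ ∀ v : V, ∃ u ∈ S, G.Adj u v}


section Aux
variable {V : Type*} (G : SimpleGraph V)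

lemma totDominatedBy_cons (v : V) (h : List V) :
    totDominatedBy G (v :: h) = G.neighborSet v ∪ totDominatedBy G h := by
  simp [totDominatedBy, Set.biUnion_insert]

lemma dominatedBy_cons (v : V) (h : List V) :
    dominatedBy G (v :: h) = closedNbhd G v ∪ dominatedBy G h := by
  simp [dominatedBy, Set.biUnion_insert]

lemma zLegal_imp_tgLegal {ht hz : List V}
    (hsub : totDominatedBy G ht ⊆ dominatedBy G hz) {v : V}
    (hv : zLegal G ∅ hz v) : tgLegal G ht v := by
  obtain ⟨x, hx1, hx2⟩ := hv
  exact ⟨x, hx1, fun hmem => hx2 (Or.inr (hsub hmem))⟩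

lemma canEnd_tg_to_z : ∀ (k : ℕ) (turn : Bool) (ht hz : List V),
    totDominatedBy G ht ⊆ dominatedBy G hz →
    canEnd (tgLegal G) k turn ht → canEnd (zLegal G ∅) k turn hz := by
  intro k
  induction k with
  | zero =>
    intro turn ht hz hsub hend v hv
    exact hend v (zLegal_imp_tgLegal G hsub hv)
  | succ k ih =>
    intro turn ht hz hsub hend
    have hsub' : ∀ v : V, totDominatedBy G (v :: ht) ⊆ dominatedBy G (v :: hz) := by
      intro v
      rw [totDominatedBy_cons, dominatedBy_cons]
      exact Set.union_subset_union (Set.subset_insert _ _) hsub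
    cases turn with
    | false =>
      intro v hv
      exact ih true (v :: ht) (v :: hz) (hsub' v)
        (hend v (zLegal_imp_tgLegal G hsub hv))
    | true =>
      rcases hend with hend | ⟨v, hvleg, hv⟩
      · exact Or.inl fun v hv => hend v (zLegal_imp_tgLegal G hsub hv)
      · by_cases hz1 : ∀ w, ¬ zLegal G ∅ hz w
        · exact Or.inl hz1
        · push_neg at hz1
          obtain ⟨w, hw⟩ := hz1
          by_cases hvz : zLegal G ∅ hz v
          · exact Or.inr ⟨v, hvz, ih false (v :: ht) (v :: hz) (hsub' v) hv⟩
          · -- v is not z-legal: N(v) ⊆ ∅ ∪ dominatedBy hz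
            have hNv : G.neighborSet v ⊆ dominatedBy G hz := by
              intro x hx
              by_contra hxn
              exact hvz ⟨x, hx, fun hmem => hxn (hmem.resolve_left (by simp))⟩
            refine Or.inr ⟨w, hw, ih false (v :: ht) (w :: hz) ?_ hv⟩
            rw [totDominatedBy_cons, dominatedBy_cons]
            intro x hx
            rcases hx with hx | hx
            · exact Or.inr (hNv hx)
            · exact Or.inr (hsub hx)

lemma canEnd_tg_exists [Fintype V] :
    ∀ (n : ℕ) (turn : Bool) (h : List V),
      (totDominatedBy G h)ᶜ.ncard ≤ n → canEnd (tgLegal G) n turn h := by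
  intro n
  induction n with
  | zero =>
    intro turn h hcard v hv
    obtain ⟨x, hx1, hx2⟩ := hv
    have : x ∈ (totDominatedBy G h)ᶜ := hx2
    have hne : (totDominatedBy G h)ᶜ.Nonempty := ⟨x, this⟩
    exact hne.ne_empty ((Set.ncard_eq_zero (Set.toFinite _)).mp (Nat.le_zero.mp hcard))
  | succ n ih =>
    intro turn h hcard
    have key : ∀ v : V, tgLegal G h v → (totDominatedBy G (v :: h))ᶜ.ncard ≤ n := by
      intro v hv
      obtain ⟨x, hx1, hx2⟩ := hv
      have hssub : (totDominatedBy G (v :: h))ᶜ ⊂ (totDominatedBy G h)ᶜ := by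
        rw [totDominatedBy_cons]
        constructor
        · exact Set.compl_subset_compl.mpr Set.subset_union_right
        · intro hcon
          have : x ∈ (totDominatedBy G h)ᶜ := hx2
          have hx3 := hcon this
          simp only [Set.mem_compl_iff, Set.mem_union] at hx3
          exact hx3 (Or.inl hx1)
      have := Set.ncard_lt_ncard hssub (Set.toFinite _)
      omega
    cases turn with
    | false => exact fun v hv => ih true (v :: h) (key v hv)
    | true =>
      by_cases hleg : ∀ v, ¬ tgLegal G h v
      · exact Or.inl hleg
      · push_neg at hleg
        obtain ⟨v, hv⟩ := hleg
        exact Or.inr ⟨v, hv, ih false (v :: h) (key v hv)⟩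

end Aux

/-- The game Z-domination number is at most the game total domination number. -/
theorem gammaZg_le_gammaTg {V : Type*} [Fintype V] (G : SimpleGraph V)
    (hG : isolateFree G) :
    gammaZg G ≤ gammaTg G := by
  have hne : Set.Nonempty {k | canEnd (tgLegal G) k true []} := by
    refine ⟨Fintype.card V, canEnd_tg_exists G _ true [] ?_⟩
    exact le_trans (Set.ncard_le_ncard (Set.subset_univ _) (Set.toFinite _))
      (by simp [Set.ncard_univ])
  have hm := Nat.sInf_mem hne
  have hz : canEnd (zLegal G ∅) (sInf {k | canEnd (tgLegal G) k true []}) true [] := by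
    refine canEnd_tg_to_z G _ true [] [] ?_ hm
    simp [totDominatedBy]
  exact Nat.sInf_le hz
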